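/- Let Φ be the negative entropy restricted to the simplex Δ(A) over a finite action set A (Φ(x) = ∑_a x_a log x_a − x_a on Δ, +∞ off Δ), so D_Φ(p, q) = D_KL(p‖q) for p, q ∈ Δ with q fully supported. Let v, c, u ∈ Δ(A) with v, c fully supported and ‖u/v‖_∞ finite. Then D_Φ(u, v) + D_Φ(v, c) − D_Φ(u, c) ≤ (1 + ‖u/v‖_∞)(D_Φ(v, c) + √(2 D_Φ(v, c))). -/
import Mathlib


/-- Let `Φ` be the negative entropy restricted to the simplex `Δ(A)`, so
`D_Φ(p, q) = D_KL(p‖q)`. For `v, c, u ∈ Δ(A)` with `v, c` fully supported and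
`M = ‖u/v‖_∞ = max_a u a / v a`,
`D_KL(u‖v) + D_KL(v‖c) - D_KL(u‖c) ≤ (1 + M) (D_KL(v‖c) + √(2 D_KL(v‖c)))`. -/
theorem approximate_pythagorean_kl_simplex {A : Type*} [Fintype A] [Nonempty A]
    (u v c : A → ℝ)
    (hu0 : ∀ a, 0 ≤ u a) (hu1 : ∑ a, u a = 1)
    (hv0 : ∀ a, 0 < v a) (hv1 : ∑ a, v a = 1)
    (hc0 : ∀ a, 0 < c a) (hc1 : ∑ a, c a = 1) :
    (∑ a, u a * Real.log (u a / v a)) + (∑ a, v a * Real.log (v a / c a)) -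
        (∑ a, u a * Real.log (u a / c a)) ≤
      (1 + Finset.univ.sup' Finset.univ_nonempty (fun a => u a / v a)) *
        ((∑ a, v a * Real.log (v a / c a)) +
          Real.sqrt (2 * ∑ a, v a * Real.log (v a / c a))) := by
  classical
  set M := Finset.univ.sup' Finset.univ_nonempty (fun a => u a / v a) with hM
  set D := ∑ a, v a * Real.log (v a / c a) with hD
  obtain ⟨a0⟩ := ‹Nonempty A›
  have hM0 : 0 ≤ M := by
    have h := Finset.le_sup' (fun a => u a / v a) (Finset.mem_univ a0)
    rw [← hM] at h
    exact le_trans (div_nonneg (hu0 a0) (hv0 a0).le) h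
  have huv : ∀ a, u a ≤ M * v a := fun a => by
    have h := Finset.le_sup' (fun a => u a / v a) (Finset.mem_univ a)
    rw [← hM] at h
    calc u a = (u a / v a) * v a := (div_mul_cancel₀ (u a) (hv0 a).ne').symm
    _ ≤ M * v a := mul_le_mul_of_nonneg_right h (hv0 a).le
  set h : A → ℝ := fun a => c a / v a - 1 - (Real.log (c a) - Real.log (v a)) with hh
  have hha : ∀ a, h a = c a / v a - 1 - (Real.log (c a) - Real.log (v a)) := fun a => rfl
  have hlog : ∀ a, Real.log (c a) - Real.log (v a) = Real.log (c a / v a) := fun a =>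
    (Real.log_div (hc0 a).ne' (hv0 a).ne').symm
  have hpos : ∀ a, 0 ≤ h a := fun a => by
    have := Real.log_le_sub_one_of_pos (div_pos (hc0 a) (hv0 a))
    rw [hha a, hlog a]; linarith
  have hDh : ∑ a, v a * h a = D := by
    have key : ∀ a, v a * h a = c a - v a + v a * Real.log (v a / c a) := fun a => by
      have hvne := (hv0 a).ne'
      rw [hha a, Real.log_div (hv0 a).ne' (hc0 a).ne']
      field_simp
      ring
    calc ∑ a, v a * h a = ∑ a, (c a - v a + v a * Real.log (v a / c a)) :=
          Finset.sum_congr rfl fun a _ => key a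
      _ = (∑ a, c a) - (∑ a, v a) + ∑ a, v a * Real.log (v a / c a) := by
          rw [Finset.sum_add_distrib, Finset.sum_sub_distrib]
      _ = D := by rw [hc1, hv1, ← hD]; ring
  have hD0 : 0 ≤ D := by
    rw [← hDh]
    exact Finset.sum_nonneg fun a _ => mul_nonneg (hv0 a).le (hpos a)
  have hsle : ∀ a, max (Real.log (c a) - Real.log (v a)) 0 ≤ Real.sqrt (2 * h a) := fun a => by
    rcases le_or_gt (Real.log (c a) - Real.log (v a)) 0 with hx | hx
    · rw [max_eq_right hx]; positivity
    · rw [max_eq_left hx.le]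
      set x := Real.log (c a) - Real.log (v a) with hxdef
      have hexp : Real.exp x = c a / v a := by
        rw [hxdef, hlog a, Real.exp_log (div_pos (hc0 a) (hv0 a))]
      have hq := Real.sum_le_exp_of_nonneg hx.le 3
      rw [Finset.sum_range_succ, Finset.sum_range_succ, Finset.sum_range_one] at hq
      norm_num [Nat.factorial] at hq
      rw [Real.le_sqrt hx.le (mul_nonneg (by norm_num) (hpos a))]
      have hheq : h a = Real.exp x - 1 - x := by rw [hha a, ← hexp]
      nlinarith
  have hsum : ∑ a, v a * max (Real.log (c a) - Real.log (v a)) 0 ≤ Real.sqrt (2 * D) := by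
    have step1 : ∀ a, v a * max (Real.log (c a) - Real.log (v a)) 0
        ≤ Real.sqrt (v a) * Real.sqrt (v a * (2 * h a)) := fun a => by
      calc v a * max (Real.log (c a) - Real.log (v a)) 0
          ≤ v a * Real.sqrt (2 * h a) := mul_le_mul_of_nonneg_left (hsle a) (hv0 a).le
        _ = Real.sqrt (v a) * Real.sqrt (v a * (2 * h a)) := by
            rw [Real.sqrt_mul (hv0 a).le, ← mul_assoc, Real.mul_self_sqrt (hv0 a).le]
    have step2 : ∑ a, Real.sqrt (v a) * Real.sqrt (v a * (2 * h a))
        ≤ Real.sqrt (∑ a, v a) * Real.sqrt (∑ a, v a * (2 * h a)) := by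
      have cs := Real.sum_mul_le_sqrt_mul_sqrt Finset.univ
        (fun a => Real.sqrt (v a)) (fun a => Real.sqrt (v a * (2 * h a)))
      have e1 : ∑ a, Real.sqrt (v a) ^ 2 = ∑ a, v a :=
        Finset.sum_congr rfl fun a _ => Real.sq_sqrt (hv0 a).le
      have e2 : ∑ a, Real.sqrt (v a * (2 * h a)) ^ 2 = ∑ a, v a * (2 * h a) :=
        Finset.sum_congr rfl fun a _ => Real.sq_sqrt
          (mul_nonneg (hv0 a).le (mul_nonneg (by norm_num) (hpos a)))
      rw [e1, e2] at cs
      exact cs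
    have heq : ∑ a, v a * (2 * h a) = 2 * D := by
      rw [← hDh, Finset.mul_sum]; exact Finset.sum_congr rfl fun a _ => by ring
    calc ∑ a, v a * max (Real.log (c a) - Real.log (v a)) 0
        ≤ ∑ a, Real.sqrt (v a) * Real.sqrt (v a * (2 * h a)) :=
          Finset.sum_le_sum fun a _ => step1 a
      _ ≤ Real.sqrt (∑ a, v a) * Real.sqrt (∑ a, v a * (2 * h a)) := step2
      _ = Real.sqrt (2 * D) := by rw [hv1, heq, Real.sqrt_one, one_mul]
  have hLHS : (∑ a, u a * Real.log (u a / v a)) + D - (∑ a, u a * Real.log (u a / c a))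
      = D + ∑ a, u a * (Real.log (c a) - Real.log (v a)) := by
    have key : ∀ a, u a * Real.log (u a / v a) - u a * Real.log (u a / c a)
        = u a * (Real.log (c a) - Real.log (v a)) := fun a => by
      rcases eq_or_lt_of_le (hu0 a) with h0 | h0
      · simp [← h0]
      · rw [Real.log_div h0.ne' (hv0 a).ne', Real.log_div h0.ne' (hc0 a).ne']; ring
    have e : (∑ a, u a * Real.log (u a / v a)) - (∑ a, u a * Real.log (u a / c a))
        = ∑ a, u a * (Real.log (c a) - Real.log (v a)) := by
      rw [← Finset.sum_sub_distrib]
      exact Finset.sum_congr rfl fun a _ => key a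
    linarith
  rw [hLHS]
  have hmid : ∑ a, u a * (Real.log (c a) - Real.log (v a)) ≤ M * Real.sqrt (2 * D) := by
    calc ∑ a, u a * (Real.log (c a) - Real.log (v a))
        ≤ ∑ a, M * (v a * max (Real.log (c a) - Real.log (v a)) 0) := by
          apply Finset.sum_le_sum; intro a _
          have h1 : u a * (Real.log (c a) - Real.log (v a))
              ≤ u a * max (Real.log (c a) - Real.log (v a)) 0 :=
            mul_le_mul_of_nonneg_left (le_max_left _ _) (hu0 a)
          have h2 : u a * max (Real.log (c a) - Real.log (v a)) 0
              ≤ M * v a * max (Real.log (c a) - Real.log (v a)) 0 :=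
            mul_le_mul_of_nonneg_right (huv a) (le_max_right _ _)
          calc u a * (Real.log (c a) - Real.log (v a)) ≤ _ := h1
            _ ≤ M * v a * max (Real.log (c a) - Real.log (v a)) 0 := h2
            _ = M * (v a * max (Real.log (c a) - Real.log (v a)) 0) := mul_assoc _ _ _
      _ = M * ∑ a, v a * max (Real.log (c a) - Real.log (v a)) 0 := (Finset.mul_sum _ _ _).symm
      _ ≤ M * Real.sqrt (2 * D) := mul_le_mul_of_nonneg_left hsum hM0
  have hsq : 0 ≤ Real.sqrt (2 * D) := Real.sqrt_nonneg _
  nlinarith [mul_nonneg hM0 hD0]
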